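/- Let $\alpha\in H^2(\mathbb{T})$ be such that $\alpha'$ has at most a finite number of zeros on $\mathbb{T}$, and suppose $g\in H^1(\mathbb{T}^2)$ satisfies $\int_{\mathbb{T}}g(x_1,x_2)\,dx_1=0$ for a.e. $x_2\in\mathbb{T}$ and the eigenvalue equation $-\alpha(x_2)\,\partial_{x_1}g(x_1,x_2)=\lambda\,g(x_1,x_2)$ holds in $L^2(\mathbb{T}^2)$ for some $\lambda\in\mathbb{C}$. Then $g=0$. In other words, the skew-symmetric transport operator $Sg=-\tilde v\cdot\nabla g$ associated with the shear flow $\tilde v(x_1,x_2)=[\alpha(x_2),0]^\top$ has no eigenvectors in $H^1(\mathbb{T}^2)\cap X$ other than zero. -/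

import Mathlib

noncomputable section
open MeasureTheory Real Filter Topology

/-- Points of `ℝ^d`; the torus `𝕋^d = ℝ^d / 2πℤ^d` is modelled via `2π`-periodic
functions on `ℝ^d`. -/
abbrev Pt (d : ℕ) := EuclideanSpace ℝ (Fin d)

/-- A function on `ℝ^d` descends to the torus `𝕋^d`. -/
def IsPeriodic {d : ℕ} {E : Type*} (f : Pt d → E) : Prop :=
  ∀ (x : Pt d) (i : Fin d), f (x + (2 * π) • EuclideanSpace.single i (1 : ℝ)) = f x

/-- A fundamental domain for the torus. -/
def box (d : ℕ) : Set (Pt d) := {x | ∀ i, x i ∈ Set.Ico (0 : ℝ) (2 * π)}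

/-- Average of a scalar function over the torus. -/
def avg {d : ℕ} (f : Pt d → ℝ) : ℝ := (∫ x in box d, f x) / (2 * π) ^ d

/-- The `L²(𝕋^d)` norm. -/
def L2Norm {d : ℕ} {E : Type*} [NormedAddCommGroup E] (f : Pt d → E) : ℝ :=
  Real.sqrt (∫ x in box d, ‖f x‖ ^ 2)

/-- The Sobolev `H^k(𝕋^d)` norm. -/
def HNorm {d : ℕ} {E : Type*} [NormedAddCommGroup E] [NormedSpace ℝ E]
    (k : ℕ) (f : Pt d → E) : ℝ :=
  Real.sqrt (∑ i ∈ Finset.range (k + 1), ∫ x in box d, ‖iteratedFDeriv ℝ i f x‖ ^ 2)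

/-- Partial derivative `∂ᵢ f` of a scalar function. -/
def pd {d : ℕ} (i : Fin d) (f : Pt d → ℝ) (x : Pt d) : ℝ :=
  fderiv ℝ f x (EuclideanSpace.single i (1 : ℝ))

/-- Laplacian of a scalar function. -/
def lap {d : ℕ} (f : Pt d → ℝ) (x : Pt d) : ℝ := ∑ i, pd i (pd i f) x

/-- `(v · ∇) f` for a vector field `v` and a scalar function `f`. -/
def dotGrad {d : ℕ} (v : Pt d → Pt d) (f : Pt d → ℝ) (x : Pt d) : ℝ :=
  ∑ i, v x i * pd i f x

/-- A vector field is divergence free. -/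
def DivFree {d : ℕ} (v : Pt d → Pt d) : Prop :=
  ∀ x, (∑ i, pd i (fun y => v y i) x) = 0

/-- A vector field has zero average over the torus. -/
def ZeroAvgV {d : ℕ} (v : Pt d → Pt d) : Prop := ∀ i, (∫ x in box d, v x i) = 0

/-- Membership in `H^k(𝕋^d; E)` (classical-regularity encoding). -/
def MemH {d : ℕ} {E : Type*} [NormedAddCommGroup E] [NormedSpace ℝ E]
    (k : ℕ) (f : Pt d → E) : Prop := IsPeriodic f ∧ ContDiff ℝ k f

/-- Membership in the zero-average scalar Sobolev space `H^k` of the paper. -/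
def MemHs {d : ℕ} (k : ℕ) (f : Pt d → ℝ) : Prop :=
  MemH k f ∧ (∫ x in box d, f x) = 0

/-- Membership in `H^k_σ`: divergence-free, zero-average vector fields. -/
def MemHσ {d : ℕ} (k : ℕ) (v : Pt d → Pt d) : Prop :=
  MemH k v ∧ DivFree v ∧ ZeroAvgV v

/-- `f ∈ C(J; H^k)`: membership for each time together with continuity in the
`H^k` norm. -/
def ContInH {d : ℕ} {E : Type*} [NormedAddCommGroup E] [NormedSpace ℝ E]
    (k : ℕ) (J : Set ℝ) (f : ℝ → Pt d → E) : Prop :=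
  (∀ t ∈ J, MemH k (f t)) ∧
  ∀ t₀ ∈ J, Tendsto (fun t => HNorm k (fun x => f t x - f t₀ x)) (nhdsWithin t₀ J) (nhds 0)

/-- The `C(J_T; H^k)` norm: sup in time of the `H^k` norm. -/
def CHNorm {d : ℕ} {E : Type*} [NormedAddCommGroup E] [NormedSpace ℝ E]
    (k : ℕ) (T : ℝ) (f : ℝ → Pt d → E) : ℝ :=
  ⨆ t : Set.Icc (0 : ℝ) T, HNorm k (f t.1)

/-- The relaxation norm `|||v|||_{T,k} = sup_{t ∈ [0,T]} ‖∫_0^t v(s) ds‖_{H^k}`. -/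
def RelaxNorm {d : ℕ} {E : Type*} [NormedAddCommGroup E] [NormedSpace ℝ E]
    [CompleteSpace E] (k : ℕ) (T : ℝ) (f : ℝ → Pt d → E) : ℝ :=
  ⨆ t : Set.Icc (0 : ℝ) T, HNorm k (fun x => ∫ s in Set.Ioc (0 : ℝ) t.1, f s x)

/-- Build a point of `ℝ²` from two coordinates. -/
def pt2 (a b : ℝ) : Pt 2 := (EuclideanSpace.equiv (Fin 2) ℝ).symm ![a, b]


lemma pt2_apply_one (a b : ℝ) : pt2 a b 1 = b := rfl

lemma pt2_eta (x : Pt 2) : pt2 (x 0) (x 1) = x := by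
  ext i; fin_cases i <;> rfl

lemma pt2_decomp (s b : ℝ) :
    pt2 s b = pt2 0 b + s • EuclideanSpace.single (0 : Fin 2) (1 : ℝ) := by
  ext i; fin_cases i <;>
    simp [pt2, PiLp.add_apply, PiLp.smul_apply, EuclideanSpace.single_apply]

lemma pt2_decomp' (s b : ℝ) :
    pt2 s b = pt2 s 0 + b • EuclideanSpace.single (1 : Fin 2) (1 : ℝ) := by
  ext i; fin_cases i <;>
    simp [pt2, PiLp.add_apply, PiLp.smul_apply, EuclideanSpace.single_apply]

lemma pt2_shift (s b : ℝ) :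
    pt2 (s + 2*π) b = pt2 s b + (2*π) • EuclideanSpace.single (0 : Fin 2) (1 : ℝ) := by
  ext i; fin_cases i <;>
    simp [pt2, PiLp.add_apply, PiLp.smul_apply, EuclideanSpace.single_apply]

lemma hasDerivAt_slice (g : Pt 2 → ℂ) (hg : ContDiff ℝ 1 g) (b s : ℝ) :
    HasDerivAt (fun t => g (pt2 t b))
      (fderiv ℝ g (pt2 s b) (EuclideanSpace.single (0 : Fin 2) (1 : ℝ))) s := by
  have hι : HasDerivAt (fun t : ℝ => pt2 t b)
      (EuclideanSpace.single (0 : Fin 2) (1 : ℝ)) s := by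
    have : HasDerivAt (fun t : ℝ => pt2 0 b + t • EuclideanSpace.single (0 : Fin 2) (1 : ℝ))
        ((1:ℝ) • EuclideanSpace.single (0 : Fin 2) (1 : ℝ)) s :=
      ((hasDerivAt_id s).smul_const _).const_add _
    convert this using 2 with t
    · exact pt2_decomp t b
    · rw [one_smul]
  have hg' := (hg.differentiable one_ne_zero).differentiableAt (x := pt2 s b)
  exact hg'.hasFDerivAt.comp_hasDerivAt s hι

lemma slice_exp (g : Pt 2 → ℂ) (hg : ContDiff ℝ 1 g) (b : ℝ) (c : ℂ)
    (hc : ∀ s : ℝ, fderiv ℝ g (pt2 s b) (EuclideanSpace.single (0 : Fin 2) (1 : ℝ))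
      = c * g (pt2 s b)) :
    ∀ s : ℝ, g (pt2 s b) = Complex.exp (c * s) * g (pt2 0 b) := by
  set h : ℝ → ℂ := fun t => g (pt2 t b) with hh
  have hder : ∀ s : ℝ, HasDerivAt h (c * h s) s := by
    intro s; have := hasDerivAt_slice g hg b s; rwa [hc s] at this
  set F : ℝ → ℂ := fun t => Complex.exp (-(c * t)) * h t with hF
  have hFder : ∀ s : ℝ, HasDerivAt F 0 s := by
    intro s
    have he : HasDerivAt (fun t : ℝ => Complex.exp (-(c * t)))
        (-c * Complex.exp (-(c * s))) s := by
      have h1 : HasDerivAt (fun w : ℂ => Complex.exp (-(c * w)))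
          (-c * Complex.exp (-(c * (s:ℂ)))) (s : ℂ) := by
        have hlin : HasDerivAt (fun w : ℂ => -(c * w)) (-c) (s : ℂ) := by
          simpa [Pi.neg_def] using ((hasDerivAt_id (s:ℂ)).const_mul c).neg
        simpa [mul_comm, Function.comp_def] using (Complex.hasDerivAt_exp (-(c * (s:ℂ)))).comp (s:ℂ) hlin
      exact h1.comp_ofReal
    have := he.mul (hder s)
    exact this.congr_deriv (by ring)
  have hconst : ∀ s : ℝ, F s = F 0 := by
    intro s
    exact is_const_of_deriv_eq_zero (fun t => (hFder t).differentiableAt)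
      (fun t => (hFder t).deriv) s 0
  intro s
  have := hconst s
  simp only [hF] at this
  have h0 : Complex.exp (-(c * (0:ℝ))) = 1 := by norm_num
  rw [h0, one_mul] at this
  have hne : Complex.exp (-(c * s)) ≠ 0 := Complex.exp_ne_zero _
  have : h s = (Complex.exp (-(c * s)))⁻¹ * h 0 := by
    field_simp at this ⊢
    linear_combination this
  show h s = Complex.exp (c * s) * h 0
  rw [this, ← Complex.exp_neg]
  ring_nf

lemma preimage_countable_of_finite_crit (α : ℝ → ℝ) (hα_per : ∀ s, α (s + 2 * π) = α s)
    (hα_reg : ContDiff ℝ 2 α)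
    (hα_zeros : {s ∈ Set.Ico (0 : ℝ) (2 * π) | deriv α s = 0}.Finite)
    (S : Set ℝ) (hS : S.Countable) : (α ⁻¹' S).Countable := by
  classical
  have hper : Function.Periodic α (2 * π) := hα_per
  set Z : Set ℝ := {s | deriv α s = 0} with hZ
  have hZd : ∀ (n : ℤ) (x : ℝ), deriv α (x - n • (2 * π)) = deriv α x := by
    intro n x
    have hfun : (fun y => α (y - n • (2 * π))) = α := funext fun y => hper.sub_zsmul_eq n
    rw [← deriv_comp_sub_const, hfun]
  have hZc : Z.Countable := by
    have hsub : Z ⊆ ⋃ n : ℤ, (fun t => t + n • (2 * π)) ''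
        {s ∈ Set.Ico (0 : ℝ) (2 * π) | deriv α s = 0} := by
      intro s hs
      have hp : (0 : ℝ) < 2 * π := two_pi_pos
      set n := toIcoDiv hp 0 s with hn
      have ht : toIcoMod hp 0 s ∈ Set.Ico (0 : ℝ) (0 + 2 * π) := toIcoMod_mem_Ico hp 0 s
      rw [zero_add] at ht
      have htm : toIcoMod hp 0 s = s - n • (2 * π) := rfl
      refine Set.mem_iUnion.2 ⟨n, ⟨toIcoMod hp 0 s, ⟨ht, ?_⟩, ?_⟩⟩
      · show deriv α (toIcoMod hp 0 s) = 0
        rw [htm, hZd]; exact hs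
      · show toIcoMod hp 0 s + n • (2 * π) = s
        rw [htm]; ring
    exact Set.Countable.mono hsub
      (Set.countable_iUnion fun n => (hα_zeros.image _).countable)
  have hcont : Continuous (deriv α) := hα_reg.continuous_deriv (by norm_num)
  have hUopen : IsOpen Zᶜ := (isClosed_singleton.preimage hcont).isOpen_compl
  have hinj : ∀ p q : ℝ, Set.Icc p q ⊆ Zᶜ → Set.InjOn α (Set.Icc p q) := by
    intro p q hpq
    have key : ∀ a ∈ Set.Icc p q, ∀ b ∈ Set.Icc p q, a < b → α a = α b → False := by
      intro a ha b hb hlt heq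
      obtain ⟨c, hc, hc0⟩ := exists_deriv_eq_zero hlt hα_reg.continuous.continuousOn heq
      have : c ∈ Set.Icc p q := ⟨le_trans ha.1 hc.1.le, le_trans hc.2.le hb.2⟩
      exact hpq this hc0
    intro a ha b hb hab
    rcases lt_trichotomy a b with h | h | h
    · exact absurd (key a ha b hb h hab) not_false
    · exact h
    · exact absurd (key b hb a ha h hab.symm) not_false
  set C : ℚ × ℚ → Set ℝ := fun pq =>
    if Set.Icc (pq.1 : ℝ) (pq.2 : ℝ) ⊆ Zᶜ then α ⁻¹' S ∩ Set.Icc (pq.1 : ℝ) (pq.2 : ℝ)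
    else ∅ with hC
  have hCc : ∀ pq, (C pq).Countable := by
    intro pq
    rw [hC]
    dsimp only
    split_ifs with hin
    · have hmaps : Set.MapsTo α (α ⁻¹' S ∩ Set.Icc (pq.1 : ℝ) (pq.2 : ℝ)) S :=
        fun x hx => hx.1
      exact hmaps.countable_of_injOn ((hinj _ _ hin).mono Set.inter_subset_right) hS
    · exact Set.countable_empty
  have hrest : (α ⁻¹' S ∩ Zᶜ).Countable := by
    have hsub : α ⁻¹' S ∩ Zᶜ ⊆ ⋃ pq : ℚ × ℚ, C pq := by
      rintro x ⟨hxS, hxU⟩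
      obtain ⟨ε, hε, hball⟩ := Metric.isOpen_iff.mp hUopen x hxU
      rw [Real.ball_eq_Ioo] at hball
      obtain ⟨p, hp1, hp2⟩ := exists_rat_btwn (show x - ε < x by linarith)
      obtain ⟨q, hq1, hq2⟩ := exists_rat_btwn (show x < x + ε by linarith)
      refine Set.mem_iUnion.2 ⟨(p, q), ?_⟩
      have hcond : Set.Icc (p : ℝ) (q : ℝ) ⊆ Zᶜ := by
        intro y hy
        exact hball ⟨lt_of_lt_of_le hp1 hy.1, lt_of_le_of_lt hy.2 hq2⟩
      rw [hC]; dsimp only; rw [if_pos hcond]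
      exact ⟨hxS, hp2.le, hq1.le⟩
    exact Set.Countable.mono hsub (Set.countable_iUnion hCc)
  refine Set.Countable.mono ?_ (hZc.union hrest)
  intro x hx
  by_cases hz : deriv α x = 0
  · exact Or.inl hz
  · exact Or.inr ⟨hx, hz⟩

/-- Let `α ∈ H²(𝕋)` be such that `α'` has at most finitely
many zeros, and let `g ∈ H¹(𝕋²;ℂ)` have zero `x₁`-average for a.e. `x₂` and
satisfy `-α(x₂) ∂₁ g = λ g` in `L²(𝕋²)` for some `λ ∈ ℂ`.  Then `g = 0`:
the transport operator of the shear flow `(α(x₂), 0)` has no eigenvectors in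
`H¹(𝕋²) ∩ X` other than zero. -/
theorem statement18 (α : ℝ → ℝ) (hα_per : ∀ s, α (s + 2 * π) = α s)
    (hα_reg : ContDiff ℝ 2 α)
    (hα_zeros : {s ∈ Set.Ico (0 : ℝ) (2 * π) | deriv α s = 0}.Finite)
    (g : Pt 2 → ℂ) (hg_per : IsPeriodic g) (hg_reg : ContDiff ℝ 1 g)
    (hg_avg : ∀ᵐ x₂ : ℝ, (∫ s in Set.Ioc (0 : ℝ) (2 * π), g (pt2 s x₂)) = 0)
    (lam : ℂ)
    (heig : ∀ x : Pt 2,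
      -((α (x 1) : ℂ) * fderiv ℝ g x (EuclideanSpace.single 0 (1 : ℝ))) =
        lam * g x) :
    ∀ x, g x = 0 := by
  classical
  set S : Set ℝ := insert 0 (Set.range fun k : ℤ => (-lam / (Complex.I * k)).re) with hSdef
  have hSc : S.Countable := (Set.countable_range _).insert 0
  have hBnull : volume (α ⁻¹' S) = 0 :=
    (preimage_countable_of_finite_crit α hα_per hα_reg hα_zeros S hSc).measure_zero _
  have hkey : ∀ b : ℝ, ((∫ s in Set.Ioc (0:ℝ) (2*π), g (pt2 s b)) = 0 ∧ α b ∉ S) →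
      ∀ s : ℝ, g (pt2 s b) = 0 := by
    rintro b ⟨havg, hnS⟩
    have ha0 : (α b : ℂ) ≠ 0 := by
      simp only [ne_eq, Complex.ofReal_eq_zero]
      intro h; exact hnS (by rw [hSdef, h]; exact Set.mem_insert _ _)
    set c : ℂ := -lam / (α b : ℂ) with hcdef
    have hc : ∀ s : ℝ, fderiv ℝ g (pt2 s b) (EuclideanSpace.single (0 : Fin 2) (1 : ℝ))
        = c * g (pt2 s b) := by
      intro s
      have h1 := heig (pt2 s b)
      rw [pt2_apply_one] at h1
      rw [hcdef]
      field_simp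
      linear_combination -h1
    have hexp := slice_exp g hg_reg b c hc
    have hper : ∀ s : ℝ, g (pt2 (s + 2*π) b) = g (pt2 s b) := by
      intro s; rw [pt2_shift]; exact hg_per (pt2 s b) 0
    by_cases h0 : g (pt2 0 b) = 0
    · intro s; rw [hexp s, h0, mul_zero]
    exfalso
    have he1 : Complex.exp (c * (2*(π:ℂ))) = 1 := by
      have h2 := hper 0
      rw [hexp (0 + 2*π)] at h2
      have hz : ((0:ℝ) + 2*π) = (2*π : ℝ) := by ring
      rw [hz] at h2
      push_cast at h2
      have h3 : (Complex.exp (c * (2*(π:ℂ))) - 1) * g (pt2 0 b) = 0 := by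
        linear_combination h2
      rcases mul_eq_zero.mp h3 with h | h
      · exact sub_eq_zero.mp h
      · exact absurd h h0
    obtain ⟨n, hn⟩ := Complex.exp_eq_one_iff.mp he1
    have h2pi : (2*(π:ℂ)) ≠ 0 := by
      simp [Complex.ofReal_ne_zero, Real.pi_ne_zero]
    have hcn : c = n * Complex.I := by
      have : c * (2*(π:ℂ)) = (n * Complex.I) * (2*(π:ℂ)) := by rw [hn]; ring
      exact mul_right_cancel₀ h2pi this
    by_cases hn0 : n = 0
    · have hc0 : c = 0 := by rw [hcn, hn0]; simp
      have hconst : ∀ s : ℝ, g (pt2 s b) = g (pt2 0 b) := by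
        intro s; rw [hexp s, hc0]; simp
      have : (∫ s in Set.Ioc (0:ℝ) (2*π), g (pt2 s b))
          = (volume (Set.Ioc (0:ℝ) (2*π))).toReal • g (pt2 0 b) := by
        rw [integral_congr_ae (ae_of_all _ fun s => hconst s), setIntegral_const]; rfl
      rw [havg] at this
      rw [Real.volume_Ioc, sub_zero, ENNReal.toReal_ofReal (by positivity)] at this
      have h2 : (2*π : ℝ) ≠ 0 := by positivity
      have := (smul_eq_zero.mp this.symm).resolve_left h2
      exact h0 this
    · apply hnS
      have hIn : (Complex.I * (n:ℂ)) ≠ 0 := by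
        simp [Complex.I_ne_zero, Int.cast_eq_zero, hn0]
      have hab : ((α b : ℂ)) = -lam / (Complex.I * n) := by
        rw [hcdef] at hcn
        field_simp at hcn ⊢
        linear_combination -hcn
      right
      refine ⟨n, ?_⟩
      show (-lam / (Complex.I * (n:ℂ))).re = α b
      rw [← hab, Complex.ofReal_re]
  have hGd : Dense {b : ℝ | ∀ s : ℝ, g (pt2 s b) = 0} := by
    apply Measure.dense_of_ae (μ := volume)
    filter_upwards [hg_avg, measure_eq_zero_iff_ae_notMem.mp hBnull] with b h1 h2
    exact hkey b ⟨h1, h2⟩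
  intro x
  have hcontb : Continuous fun b : ℝ => g (pt2 (x 0) b) := by
    have hmap : Continuous fun b : ℝ => pt2 (x 0) b := by
      have hfe : (fun b : ℝ => pt2 (x 0) b)
          = fun b : ℝ => pt2 (x 0) 0 + b • EuclideanSpace.single (1 : Fin 2) (1:ℝ) :=
        funext fun b => pt2_decomp' (x 0) b
      rw [hfe]
      exact continuous_const.add (continuous_id.smul continuous_const)
    exact hg_reg.continuous.comp hmap
  have hzero : (fun b : ℝ => g (pt2 (x 0) b)) = fun _ => (0:ℂ) :=
    Continuous.ext_on hGd hcontb continuous_const (fun b hb => hb (x 0))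
  have := congrFun hzero (x 1)
  rwa [pt2_eta] at this
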